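/- arXiv:2308.08291 — 2 statements merged into one kernel-verified Lean document; each statement's English description precedes it below -/
import Mathlib

section
/- (Instantaneous robust satisficing regret bound — deterministic core of Theorem 1.) Let M be a symmetric positive definite real n×n matrix, τ ∈ ℝ, w_t, w* ∈ Δ_n, β ≥ 0, and let X be a finite nonempty set with vectors f_x, u_x, σ_x ∈ ℝ^n for each x ∈ X satisfying componentwise f_x ≤ u_x ≤ f_x + 2βσ_x and σ_x ≥ 0. Assume there exists x̂ ∈ X with ⟨w_t, f_{x̂}⟩ ≥ τ. For x with ⟨w_t, f_x⟩ ≥ τ define κ(x) := max{ sup_{w ∈ Δ_n, w ≠ w_t} (τ − ⟨w, f_x⟩)/‖w − w_t‖_M , 0 }, and κ(x) := +∞ otherwise; for x with ⟨w_t, u_x⟩ ≥ τ define κ̂(x) := sup_{w ∈ Δ_n, w ≠ w_t} (τ − ⟨w, u_x⟩)/‖w − w_t‖_M, and κ̂(x) := +∞ otherwise. Let x_t ∈ argmin_{x ∈ X} κ̂(x) and κ* := min_{x ∈ X} κ(x). Then τ − κ*‖w* − w_t‖_M − ⟨w*, f_{x_t}⟩ ≤ 2β⟨w*, σ_{x_t}⟩.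 -/
open Matrix

/-- The MMD (maximum mean discrepancy) "norm" `‖w‖_M = √(wᵀ M w)` associated with a
kernel matrix `M`. -/
noncomputable def mmd {n : ℕ} (M : Matrix (Fin n) (Fin n) ℝ) (w : Fin n → ℝ) : ℝ :=
  Real.sqrt (w ⬝ᵥ M.mulVec w)

/-- The supremum (in the extended reals) appearing in the definitions of the fragility and
of the estimated fragility: `sup_{w ∈ Δ_n, w ≠ w_t} (τ - ⟨w, v⟩)/‖w - w_t‖_M`. -/
noncomputable def fragSup {n : ℕ} (M : Matrix (Fin n) (Fin n) ℝ) (τ : ℝ)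
    (wt v : Fin n → ℝ) : EReal :=
  ⨆ w : {w : Fin n → ℝ // w ∈ stdSimplex ℝ (Fin n) ∧ w ≠ wt},
    (((τ - (w : Fin n → ℝ) ⬝ᵥ v) / mmd M ((w : Fin n → ℝ) - wt) : ℝ) : EReal)

/-- The (true) fragility `κ_τ(x)` of an action whose reward vector is `v`:
`max (sup_{w ∈ Δ_n, w ≠ w_t} (τ - ⟨w, v⟩)/‖w - w_t‖_M) 0` if `⟨w_t, v⟩ ≥ τ`, and `+∞`
otherwise. -/
noncomputable def fragility {n : ℕ} (M : Matrix (Fin n) (Fin n) ℝ) (τ : ℝ)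
    (wt v : Fin n → ℝ) : EReal :=
  if τ ≤ wt ⬝ᵥ v then max (fragSup M τ wt v) 0 else ⊤

/-- The estimated fragility `κ̂_τ(x)` of an action whose upper-confidence-bound vector is
`u`: `sup_{w ∈ Δ_n, w ≠ w_t} (τ - ⟨w, u⟩)/‖w - w_t‖_M` if `⟨w_t, u⟩ ≥ τ`, and `+∞`
otherwise. -/
noncomputable def estFragility {n : ℕ} (M : Matrix (Fin n) (Fin n) ℝ) (τ : ℝ)
    (wt u : Fin n → ℝ) : EReal :=
  if τ ≤ wt ⬝ᵥ u then fragSup M τ wt u else ⊤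

open scoped MatrixOrder in
lemma psd_sqrt_exists {n : ℕ} {M : Matrix (Fin n) (Fin n) ℝ} (hP : M.PosSemidef) :
    ∃ S : Matrix (Fin n) (Fin n) ℝ, Sᵀ = S ∧ S * S = M := by
  refine ⟨CFC.sqrt M, ?_, CFC.sqrt_mul_sqrt_self M hP.nonneg⟩
  have h := (Matrix.nonneg_iff_posSemidef.mp (CFC.sqrt_nonneg M)).1
  rwa [Matrix.IsHermitian, conjTranspose_eq_transpose_of_trivial] at h

/-- Cauchy–Schwarz for the bilinear form of a positive definite matrix. -/
lemma mmd_cs {n : ℕ} {M : Matrix (Fin n) (Fin n) ℝ} (hM : M.PosDef) (a b : Fin n → ℝ) :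
    a ⬝ᵥ M.mulVec b ≤ mmd M a * mmd M b := by
  have hP := hM.posSemidef
  obtain ⟨S, hSh, hSS⟩ := psd_sqrt_exists hP
  have key : ∀ x y : Fin n → ℝ, x ⬝ᵥ M.mulVec y = (S *ᵥ x) ⬝ᵥ (S *ᵥ y) := by
    intro x y
    conv_lhs => rw [← hSS]
    rw [← mulVec_mulVec, dotProduct_mulVec]
    congr 1
    conv_lhs => rw [← hSh]
    rw [vecMul_transpose]
  have hnn : ∀ z : Fin n → ℝ, 0 ≤ z ⬝ᵥ z :=
    fun z => Finset.sum_nonneg fun i _ => mul_self_nonneg _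
  set p := S *ᵥ a
  set q := S *ᵥ b
  have h2 : (p ⬝ᵥ q) ^ 2 ≤ (p ⬝ᵥ p) * (q ⬝ᵥ q) := by
    simpa [dotProduct, sq] using Finset.sum_mul_sq_le_sq_mul_sq Finset.univ p q
  have hfin : p ⬝ᵥ q ≤ Real.sqrt (p ⬝ᵥ p) * Real.sqrt (q ⬝ᵥ q) := by
    calc p ⬝ᵥ q ≤ Real.sqrt ((p ⬝ᵥ q) ^ 2) := by
          rw [Real.sqrt_sq_eq_abs]; exact le_abs_self _
      _ ≤ Real.sqrt ((p ⬝ᵥ p) * (q ⬝ᵥ q)) := Real.sqrt_le_sqrt h2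
      _ = Real.sqrt (p ⬝ᵥ p) * Real.sqrt (q ⬝ᵥ q) := Real.sqrt_mul (hnn p) _
  rw [key, mmd, mmd, key, key]
  exact hfin

lemma mmd_pos {n : ℕ} {M : Matrix (Fin n) (Fin n) ℝ} (hM : M.PosDef) {a : Fin n → ℝ}
    (ha : a ≠ 0) : 0 < mmd M a := by
  have h := hM.re_dotProduct_pos ha
  simp only [RCLike.re_to_real, star_trivial] at h
  exact Real.sqrt_pos.mpr h

lemma mmd_sub_comm {n : ℕ} (M : Matrix (Fin n) (Fin n) ℝ) (a b : Fin n → ℝ) :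
    mmd M (a - b) = mmd M (b - a) := by
  unfold mmd
  rw [show b - a = -(a - b) by ring, mulVec_neg, dotProduct_neg, neg_dotProduct, neg_neg]

lemma dot_mono {n : ℕ} {w a b : Fin n → ℝ} (hw : ∀ i, 0 ≤ w i) (hab : ∀ i, a i ≤ b i) :
    w ⬝ᵥ a ≤ w ⬝ᵥ b :=
  Finset.sum_le_sum fun i _ => mul_le_mul_of_nonneg_left (hab i) (hw i)

/-- Uniform bound on the supremand, hence on `fragSup`. -/
lemma fragSup_le_bound {n : ℕ} {M : Matrix (Fin n) (Fin n) ℝ} (hM : M.PosDef) (τ : ℝ)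
    (wt v : Fin n → ℝ) (hv : τ ≤ wt ⬝ᵥ v) :
    fragSup M τ wt v ≤ ((mmd M (M⁻¹ *ᵥ v) : ℝ) : EReal) := by
  apply iSup_le
  rintro ⟨w, hw, hne⟩
  rw [EReal.coe_le_coe_iff]
  have hd : 0 < mmd M (w - wt) := mmd_pos hM (sub_ne_zero.mpr hne)
  rw [div_le_iff₀ hd]
  have h1 : τ - w ⬝ᵥ v ≤ (wt - w) ⬝ᵥ v := by
    rw [sub_dotProduct]; linarith
  have hv' : M.mulVec (M⁻¹ *ᵥ v) = v := by
    rw [mulVec_mulVec, Matrix.mul_nonsing_inv _ (isUnit_iff_ne_zero.mpr hM.det_pos.ne'),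
      one_mulVec]
  have h2 : (wt - w) ⬝ᵥ v ≤ mmd M (wt - w) * mmd M (M⁻¹ *ᵥ v) := by
    conv_lhs => rw [← hv']
    exact mmd_cs hM _ _
  calc τ - w ⬝ᵥ v ≤ mmd M (wt - w) * mmd M (M⁻¹ *ᵥ v) := h1.trans h2
    _ = mmd M (M⁻¹ *ᵥ v) * mmd M (w - wt) := by rw [mmd_sub_comm]; ring

lemma fragSup_anti {n : ℕ} {M : Matrix (Fin n) (Fin n) ℝ} (hM : M.PosDef) (τ : ℝ)
    (wt : Fin n → ℝ) {a b : Fin n → ℝ} (hab : ∀ i, a i ≤ b i) :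
    fragSup M τ wt b ≤ fragSup M τ wt a := by
  apply iSup_mono
  rintro ⟨w, hw, hne⟩
  rw [EReal.coe_le_coe_iff]
  have hd : 0 < mmd M (w - wt) := mmd_pos hM (sub_ne_zero.mpr hne)
  refine (div_le_div_iff_of_pos_right hd).mpr ?_
  have := dot_mono hw.1 hab
  linarith

lemma est_le_frag {n : ℕ} {M : Matrix (Fin n) (Fin n) ℝ} (hM : M.PosDef) (τ : ℝ)
    {wt : Fin n → ℝ} (hwt : wt ∈ stdSimplex ℝ (Fin n)) {a b : Fin n → ℝ}
    (hab : ∀ i, a i ≤ b i) :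
    estFragility M τ wt b ≤ fragility M τ wt a := by
  unfold estFragility fragility
  by_cases hf : τ ≤ wt ⬝ᵥ a
  · have hu : τ ≤ wt ⬝ᵥ b := hf.trans (dot_mono hwt.1 hab)
    rw [if_pos hu, if_pos hf]
    exact (fragSup_anti hM τ wt hab).trans (le_max_left _ _)
  · rw [if_neg hf]; exact le_top

/-- **instantaneous robust satisficing regret bound — deterministic core of
Theorem 1.** With `f_x ≤ u_x ≤ f_x + 2βσ_x` componentwise, `σ_x ≥ 0`, some action feasible
under the reference distribution `w_t`, `x_t` a minimizer of the estimated fragility and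
`κ* = min_x κ(x)` the minimum fragility, we have
`τ - κ*·‖w* - w_t‖_M - ⟨w*, f_{x_t}⟩ ≤ 2β⟨w*, σ_{x_t}⟩`. -/
theorem instantaneous_rs_regret_bound {n : ℕ} (M : Matrix (Fin n) (Fin n) ℝ)
    (hM : M.PosDef) (τ : ℝ) (wt wstar : Fin n → ℝ)
    (hwt : wt ∈ stdSimplex ℝ (Fin n)) (hwstar : wstar ∈ stdSimplex ℝ (Fin n))
    (β : ℝ) (hβ : 0 ≤ β)
    {X : Type*} [Fintype X] [Nonempty X]
    (f u σ : X → Fin n → ℝ)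
    (hfu : ∀ x i, f x i ≤ u x i)
    (huf : ∀ x i, u x i ≤ f x i + 2 * β * σ x i)
    (hσ : ∀ x i, 0 ≤ σ x i)
    (hfeas : ∃ xhat : X, τ ≤ wt ⬝ᵥ f xhat)
    (xt : X) (hxt : ∀ x : X, estFragility M τ wt (u xt) ≤ estFragility M τ wt (u x)) :
    τ - (⨅ x : X, fragility M τ wt (f x)).toReal * mmd M (wstar - wt) - wstar ⬝ᵥ f xt
      ≤ 2 * β * (wstar ⬝ᵥ σ xt) := by
  obtain ⟨xh, hxh⟩ := hfeas
  set K := ⨅ x : X, fragility M τ wt (f x) with hK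
  have hK0 : (0 : EReal) ≤ K := by
    refine le_iInf fun x => ?_
    unfold fragility
    split
    · exact le_max_right _ _
    · exact le_top
  have hKtop : K ≠ ⊤ := by
    have h1 : K ≤ fragility M τ wt (f xh) := iInf_le _ xh
    have h2 : fragility M τ wt (f xh) ≤ ((max (mmd M (M⁻¹ *ᵥ f xh)) 0 : ℝ) : EReal) := by
      unfold fragility
      rw [if_pos hxh]
      refine max_le ?_ ?_
      · exact (fragSup_le_bound hM τ wt (f xh) hxh).trans
          (EReal.coe_le_coe_iff.mpr (le_max_left _ _))
      · rw [show ((0 : EReal)) = ((0 : ℝ) : EReal) by simp]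
        exact EReal.coe_le_coe_iff.mpr (le_max_right _ _)
    intro htop
    rw [htop] at h1
    exact EReal.coe_ne_top _ (top_le_iff.mp (h1.trans h2))
  have hKbot : K ≠ ⊥ := ((EReal.bot_lt_zero).trans_le hK0).ne'
  have hKreal : ((K.toReal : ℝ) : EReal) = K := EReal.coe_toReal hKtop hKbot
  have hest : estFragility M τ wt (u xt) ≤ K :=
    le_iInf fun x => (hxt x).trans (est_le_frag hM τ hwt (hfu x))
  have hτu : τ ≤ wt ⬝ᵥ u xt := by
    by_contra h
    unfold estFragility at hest
    rw [if_neg h] at hest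
    exact hKtop (top_le_iff.mp hest)
  have hub : wstar ⬝ᵥ u xt ≤ wstar ⬝ᵥ f xt + 2 * β * (wstar ⬝ᵥ σ xt) := by
    calc wstar ⬝ᵥ u xt ≤ wstar ⬝ᵥ (fun i => f xt i + 2 * β * σ xt i) :=
          dot_mono hwstar.1 (huf xt)
      _ = wstar ⬝ᵥ f xt + 2 * β * (wstar ⬝ᵥ σ xt) := by
          simp only [dotProduct, Finset.mul_sum, ← Finset.sum_add_distrib]
          exact Finset.sum_congr rfl fun i _ => by ring
  by_cases hws : wstar = wt
  · subst hws
    have hmz : mmd M (wstar - wstar) = 0 := by simp [mmd]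
    rw [hmz, mul_zero]
    linarith
  · have hd : 0 < mmd M (wstar - wt) := mmd_pos hM (sub_ne_zero.mpr hws)
    have hsup : (((τ - wstar ⬝ᵥ u xt) / mmd M (wstar - wt) : ℝ) : EReal) ≤ K := by
      refine le_trans ?_ hest
      unfold estFragility
      rw [if_pos hτu]
      exact le_iSup (fun w : {w : Fin n → ℝ // w ∈ stdSimplex ℝ (Fin n) ∧ w ≠ wt} =>
        (((τ - (w : Fin n → ℝ) ⬝ᵥ u xt) / mmd M ((w : Fin n → ℝ) - wt) : ℝ) : EReal))
        ⟨wstar, hwstar, hws⟩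
    rw [← hKreal, EReal.coe_le_coe_iff, div_le_iff₀ hd] at hsup
    linarith
end

section
/- (Concentration lemma for nonnegative bounded adapted processes.) Let (Ω, 𝔉, P) be a probability space with a filtration (𝔉_t)_{t≥0}, and let (S_t)_{t≥1} be a stochastic process adapted to (𝔉_t) with 0 ≤ S_t ≤ B almost surely for some constant B ≥ 1. Let m_t := E[S_t | 𝔉_{t−1}]. Then for any T ≥ 1 and any δ ∈ (0,1), with probability at least 1 − δ, Σ_{t=1}^T m_t ≤ 2Σ_{t=1}^T S_t + 8B log(6B/δ). -/
open MeasureTheory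

lemma aux_exp_half {y : ℝ} (h0 : 0 ≤ y) (h1 : y ≤ 1) : Real.exp (-y) ≤ 1 - y / 2 := by
  have h2 : 1 + y ≤ Real.exp y := by linarith [Real.add_one_le_exp y]
  have h3 : Real.exp (-y) * Real.exp y = 1 := by rw [← Real.exp_add]; simp
  have h4 : 0 < Real.exp (-y) := Real.exp_pos _
  nlinarith [Real.exp_pos y, mul_nonneg h0 (sub_nonneg.2 h1)]

/-- **concentration lemma for nonnegative bounded adapted processes.**
Let `(S_t)` be adapted to a filtration `(ℱ_t)`, with `0 ≤ S_t ≤ B` a.s. for a constant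
`B ≥ 1`, and let `m_t = E[S_t | ℱ_{t-1}]`. Then for every `T ≥ 1` and `δ ∈ (0,1)`, with
probability at least `1 - δ`,
`Σ_{t=1}^T m_t ≤ 2 Σ_{t=1}^T S_t + 8B log(6B/δ)`. -/
theorem concentration_adapted_process {Ω : Type*} {m0 : MeasurableSpace Ω}
    (P : Measure Ω) [IsProbabilityMeasure P]
    (ℱ : Filtration ℕ m0) (S : ℕ → Ω → ℝ)
    (hadapted : StronglyAdapted ℱ S)
    (B : ℝ) (hB : 1 ≤ B)
    (hS : ∀ t, ∀ᵐ ω ∂P, 0 ≤ S t ω ∧ S t ω ≤ B)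
    (T : ℕ) (hT : 1 ≤ T) (δ : ℝ) (hδ : δ ∈ Set.Ioo (0 : ℝ) 1) :
    ENNReal.ofReal (1 - δ) ≤
      P {ω | ∑ t ∈ Finset.Icc 1 T, (P[S t | ℱ (t - 1)]) ω
          ≤ 2 * ∑ t ∈ Finset.Icc 1 T, S t ω + 8 * B * Real.log (6 * B / δ)} := by
  obtain ⟨hδ0, hδ1⟩ := hδ
  have hB0 : (0:ℝ) < B := lt_of_lt_of_le one_pos hB
  set m : ℕ → Ω → ℝ := fun t => P[S t | ℱ (t - 1)] with hm_def
  set Z : ℕ → Ω → ℝ := fun n ω => ∑ t ∈ Finset.Icc 1 n, (m t ω / (2*B) - S t ω / B)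
    with hZ_def
  -- basic measurability / integrability
  have hSm : ∀ t, StronglyMeasurable (S t) := fun t => (hadapted t).mono (ℱ.le t)
  have hSint : ∀ t, Integrable (S t) P := by
    intro t
    refine Integrable.mono' (integrable_const B) (hSm t).aestronglyMeasurable ?_
    filter_upwards [hS t] with ω hω
    rw [Real.norm_eq_abs, abs_le]; exact ⟨by linarith [hω.1], hω.2⟩
  have hmmeas : ∀ t, StronglyMeasurable[ℱ (t-1)] (m t) := fun t => stronglyMeasurable_condExp
  have hm_bdd : ∀ t, ∀ᵐ ω ∂P, 0 ≤ m t ω ∧ m t ω ≤ B := by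
    intro t
    have h1 : 0 ≤ᵐ[P] m t := condExp_nonneg ((hS t).mono fun ω h => h.1)
    have h2 : m t ≤ᵐ[P] P[(fun _ => B) | ℱ (t-1)] :=
      condExp_mono (hSint t) (integrable_const B) ((hS t).mono fun ω h => h.2)
    rw [condExp_const (ℱ.le (t-1))] at h2
    filter_upwards [h1, h2] with ω h1 h2; exact ⟨h1, h2⟩
  -- Z n is ℱ n strongly measurable
  have hZmeas : ∀ n, StronglyMeasurable[ℱ n] (Z n) := by
    intro n
    apply Finset.stronglyMeasurable_fun_sum
    intro t ht
    rw [Finset.mem_Icc] at ht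
    have ht1 : t - 1 ≤ n := (Nat.sub_le t 1).trans ht.2
    exact (((hmmeas t).mono (ℱ.mono ht1)).mul stronglyMeasurable_const).sub
      (((hadapted t).mono (ℱ.mono ht.2)).mul stronglyMeasurable_const)
  -- a.e. bound for Z n
  have hZbdd : ∀ n, ∀ᵐ ω ∂P, |Z n ω| ≤ n := by
    intro n
    have := (ae_all_iff.2 hS).and (ae_all_iff.2 hm_bdd)
    filter_upwards [this] with ω ⟨hωS, hωm⟩
    have habs : ∀ t ∈ Finset.Icc 1 n, |m t ω / (2*B) - S t ω / B| ≤ 1 := by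
      intro t _
      rw [abs_le]
      constructor
      · have := (hωm t).1; have := (hωS t).2
        have h1 : S t ω / B ≤ 1 := by rw [div_le_one hB0]; exact (hωS t).2
        have h2 : 0 ≤ m t ω / (2*B) := div_nonneg (hωm t).1 (by linarith)
        linarith
      · have h1 : 0 ≤ S t ω / B := div_nonneg (hωS t).1 hB0.le
        have h2 : m t ω / (2*B) ≤ 1 := by
          rw [div_le_one (by linarith)]; linarith [(hωm t).2]
        linarith
    calc |Z n ω| ≤ ∑ t ∈ Finset.Icc 1 n, |m t ω / (2*B) - S t ω / B| :=
          Finset.abs_sum_le_sum_abs _ _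
      _ ≤ ∑ t ∈ Finset.Icc 1 n, 1 := Finset.sum_le_sum habs
      _ ≤ n := by simp [Nat.card_Icc]
  have hexpint : ∀ n, Integrable (fun ω => Real.exp (Z n ω)) P := by
    intro n
    refine Integrable.mono' (integrable_const (Real.exp n))
      (Real.continuous_exp.comp_stronglyMeasurable
        ((hZmeas n).mono (ℱ.le n))).aestronglyMeasurable ?_
    filter_upwards [hZbdd n] with ω hω
    rw [Real.norm_eq_abs, abs_of_pos (Real.exp_pos _)]
    exact Real.exp_le_exp.2 (le_trans (le_abs_self _) hω)
  -- key supermartingale-type step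
  have hmain : ∀ n, ∫ ω, Real.exp (Z n ω) ∂P ≤ 1 := by
    intro n
    induction n with
    | zero => simp [hZ_def]
    | succ n ih =>
      set F : Ω → ℝ := fun ω => Real.exp (Z n ω + m (n+1) ω / (2*B)) with hF_def
      set G : Ω → ℝ := fun ω => Real.exp (-(S (n+1) ω / B)) with hG_def
      have hZsucc : ∀ ω, Z (n+1) ω = Z n ω + (m (n+1) ω / (2*B) - S (n+1) ω / B) := by
        intro ω
        simp only [hZ_def]
        rw [Finset.sum_Icc_succ_top (Nat.succ_le_succ (Nat.zero_le n))]
      have hFG : (fun ω => Real.exp (Z (n+1) ω)) = F * G := by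
        funext ω
        simp only [hF_def, hG_def, Pi.mul_apply, ← Real.exp_add, hZsucc ω]
        ring_nf
      have hFmeas : StronglyMeasurable[ℱ n] F := by
        refine Real.continuous_exp.comp_stronglyMeasurable ?_
        exact (hZmeas n).add
          ((stronglyMeasurable_condExp : StronglyMeasurable[ℱ n] (m (n+1))).mul
            stronglyMeasurable_const)
      have hFnonneg : ∀ ω, 0 ≤ F ω := fun ω => (Real.exp_pos _).le
      have hGint : Integrable G P := by
        refine Integrable.mono' (integrable_const 1)
          (Real.continuous_exp.comp_stronglyMeasurable
            (((hSm (n+1)).mul stronglyMeasurable_const).neg :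
              StronglyMeasurable fun ω => -(S (n+1) ω / B))).aestronglyMeasurable ?_
        filter_upwards [hS (n+1)] with ω hω
        rw [Real.norm_eq_abs, abs_of_pos (Real.exp_pos _)]
        calc Real.exp (-(S (n+1) ω / B)) ≤ Real.exp 0 := by
              apply Real.exp_le_exp.2
              exact neg_nonpos.2 (div_nonneg hω.1 hB0.le)
          _ = 1 := Real.exp_zero
      have hFGint : Integrable (F * G) P := by rw [← hFG]; exact hexpint (n+1)
      have hpull : P[F * G | ℱ n] =ᵐ[P] F * P[G | ℱ n] :=
        condExp_mul_of_stronglyMeasurable_left hFmeas hFGint hGint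
      -- the conditional bound
      have hone : Integrable (fun ω => 1 - S (n+1) ω / (2*B)) P := by
        have h1 : (fun ω => 1 - S (n+1) ω / (2*B))
            = (fun _ => (1:ℝ)) - (2*B)⁻¹ • S (n+1) := by
          funext ω; simp [smul_eq_mul]; ring
        rw [h1]
        exact (integrable_const 1).sub ((hSint (n+1)).smul _)
      have hcondG : P[G | ℱ n] ≤ᵐ[P] fun ω => Real.exp (-(m (n+1) ω / (2*B))) := by
        have hptwise : G ≤ᵐ[P] fun ω => 1 - S (n+1) ω / (2*B) := by
          filter_upwards [hS (n+1)] with ω hω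
          have hy0 : 0 ≤ S (n+1) ω / B := div_nonneg hω.1 hB0.le
          have hy1 : S (n+1) ω / B ≤ 1 := by rw [div_le_one hB0]; exact hω.2
          have := aux_exp_half hy0 hy1
          have heq : S (n+1) ω / B / 2 = S (n+1) ω / (2*B) := by ring
          simp only [hG_def]
          linarith [this, heq ▸ this]
        have h1 : P[G | ℱ n] ≤ᵐ[P] P[(fun ω => 1 - S (n+1) ω / (2*B)) | ℱ n] :=
          condExp_mono hGint hone hptwise
        have h2 : P[(fun ω => 1 - S (n+1) ω / (2*B)) | ℱ n]
            =ᵐ[P] fun ω => 1 - m (n+1) ω / (2*B) := by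
          have heqf : (fun ω => 1 - S (n+1) ω / (2*B))
              = (fun _ => (1:ℝ)) - (2*B)⁻¹ • S (n+1) := by
            funext ω; simp [smul_eq_mul]; ring
          rw [heqf]
          refine (condExp_sub (integrable_const 1) ((hSint (n+1)).smul _) (ℱ n)).trans ?_
          have h3 := condExp_smul (μ := P) (m := ℱ n) ((2*B)⁻¹ : ℝ) (S (n+1))
          filter_upwards [h3] with ω hω
          simp only [Pi.sub_apply, condExp_const (ℱ.le n), hω, Pi.smul_apply, smul_eq_mul]
          rw [div_eq_inv_mul]
          rfl
        refine h1.trans (h2.le.trans (Filter.Eventually.of_forall fun ω => ?_))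
        have := Real.add_one_le_exp (-(m (n+1) ω / (2*B)))
        linarith
      -- put it together
      have hcondint : Integrable (F * P[G | ℱ n]) P := integrable_condExp.congr hpull
      have hRHSeq : (fun ω => F ω * Real.exp (-(m (n+1) ω / (2*B))))
          = fun ω => Real.exp (Z n ω) := by
        funext ω; rw [hF_def, ← Real.exp_add]; ring_nf
      calc ∫ ω, Real.exp (Z (n+1) ω) ∂P = ∫ ω, (F * G) ω ∂P := by rw [hFG]
        _ = ∫ ω, (P[F * G | ℱ n]) ω ∂P := (integral_condExp (ℱ.le n)).symm
        _ = ∫ ω, (F * P[G | ℱ n]) ω ∂P := integral_congr_ae hpull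
        _ ≤ ∫ ω, F ω * Real.exp (-(m (n+1) ω / (2*B))) ∂P := by
            refine integral_mono_ae hcondint ?_ ?_
            · rw [hRHSeq]; exact hexpint n
            · filter_upwards [hcondG] with ω hω
              exact mul_le_mul_of_nonneg_left hω (hFnonneg ω)
        _ = ∫ ω, Real.exp (Z n ω) ∂P := by rw [hRHSeq]
        _ ≤ 1 := ih
  -- Markov step and conclusion
  set L : ℝ := Real.log (6 * B / δ) with hL_def
  have hL0 : 0 ≤ L := Real.log_nonneg (by rw [le_div_iff₀ hδ0]; nlinarith)
  have hlogδ : Real.log (1/δ) ≤ L := by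
    apply Real.log_le_log (by positivity)
    exact (div_le_div_iff_of_pos_right hδ0).2 (by nlinarith)
  set A : Set Ω := {ω | 1/δ ≤ Real.exp (Z T ω)} with hA_def
  have hPA : P A ≤ ENNReal.ofReal δ := by
    have hmarkov := mul_meas_ge_le_integral_of_nonneg
      (Filter.Eventually.of_forall fun ω => (Real.exp_pos (Z T ω)).le) (hexpint T) (1/δ)
    have h1 : (1/δ) * (P A).toReal ≤ 1 := le_trans hmarkov (hmain T)
    have h2 : (P A).toReal ≤ δ := by
      rw [div_mul_eq_mul_div, one_mul, div_le_one hδ0] at h1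
      nlinarith [ENNReal.toReal_nonneg (a := P A)]
    calc P A = ENNReal.ofReal (P A).toReal := (ENNReal.ofReal_toReal (measure_ne_top _ _)).symm
      _ ≤ ENNReal.ofReal δ := ENNReal.ofReal_le_ofReal h2
  set good : Set Ω := {ω | ∑ t ∈ Finset.Icc 1 T, m t ω
      ≤ 2 * ∑ t ∈ Finset.Icc 1 T, S t ω + 8 * B * L} with hgood_def
  have hsub : goodᶜ ⊆ A := by
    intro ω hω
    simp only [hgood_def, Set.mem_compl_iff, Set.mem_setOf_eq, not_le] at hω
    simp only [hA_def, Set.mem_setOf_eq]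
    have hZT : Z T ω = (∑ t ∈ Finset.Icc 1 T, m t ω) / (2*B)
        - (∑ t ∈ Finset.Icc 1 T, S t ω) / B := by
      simp only [hZ_def, Finset.sum_sub_distrib, Finset.sum_div]
    have hZlb : Real.log (1/δ) ≤ Z T ω := by
      rw [hZT]
      have h4L : Real.log (1/δ) ≤ 4 * L := by linarith
      rw [div_sub_div _ _ (by positivity : (2*B) ≠ 0) (by positivity : B ≠ 0)]
      rw [le_div_iff₀ (by positivity)]
      have k1 := mul_lt_mul_of_pos_right hω hB0
      have k2 := mul_le_mul_of_nonneg_right h4L (mul_pos hB0 hB0).le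
      nlinarith
    calc 1/δ = Real.exp (Real.log (1/δ)) := (Real.exp_log (by positivity)).symm
      _ ≤ Real.exp (Z T ω) := Real.exp_le_exp.2 hZlb
  have hgoodmeas : MeasurableSet good := by
    refine measurableSet_le ?_ ?_
    · exact Finset.measurable_sum _ fun t _ => ((hmmeas t).mono (ℱ.le _)).measurable
    · exact ((Finset.measurable_sum _ fun t _ => (hSm t).measurable).const_mul 2).add_const _
  have hcomp : P goodᶜ ≤ ENNReal.ofReal δ := le_trans (measure_mono hsub) hPA
  have hsum : P good + P goodᶜ = 1 := by
    rw [measure_add_measure_compl hgoodmeas, measure_univ]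
  have hfinal : ENNReal.ofReal (1 - δ) ≤ P good := by
    rw [ENNReal.ofReal_sub _ hδ0.le, ENNReal.ofReal_one]
    rw [tsub_le_iff_right]
    calc (1:ENNReal) = P good + P goodᶜ := hsum.symm
      _ ≤ P good + ENNReal.ofReal δ := add_le_add_right hcomp _
  exact hfinal
end
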